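/- Let T₁, …, Tₙ be bounded linear operators on a complex Hilbert space H. Then ‖∑_{k=1}^n T_k‖² ≤ ‖A‖ · ‖B‖, where A is the real n×n matrix with entries A_{jk} = ‖ |T_j|^{1/2} |T_k|^{1/2} ‖ and B is the real n×n matrix with entries B_{jk} = ‖ |T_j*|^{1/2} |T_k*|^{1/2} ‖, with |T| = (T*T)^{1/2}, |T|^{1/2} the positive fourth root of T*T, and ‖A‖, ‖B‖ the operator norms of the matrices on Euclidean n-space. -/

import Mathlib

set_option synthInstance.maxHeartbeats 1000000

open ContinuousLinearMap

set_option maxHeartbeats 2000000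

section Auxiliary

variable {H : Type*} [NormedAddCommGroup H] [InnerProductSpace ℂ H] [CompleteSpace H]

lemma pow_intertwine (a : H →L[ℂ] H) (k : ℕ) :
    a * (adjoint a * a) ^ k = (a * adjoint a) ^ k * a := by
  induction k with
  | zero => simp
  | succ k ih =>
    rw [pow_succ, pow_succ, ← mul_assoc, ih, mul_assoc, mul_assoc, ← mul_assoc a]

lemma aeval_intertwine (a : H →L[ℂ] H) (p : Polynomial ℝ) :
    a * Polynomial.aeval (adjoint a * a) p = Polynomial.aeval (a * adjoint a) p * a := by
  induction p using Polynomial.induction_on' with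
  | add p q hp hq => simp only [map_add, mul_add, add_mul, hp, hq]
  | monomial k c =>
    simp only [Polynomial.aeval_monomial]
    rw [← mul_assoc, ← Algebra.commutes c a, mul_assoc, pow_intertwine, ← mul_assoc, mul_assoc]

lemma cfc_intertwine (a : H →L[ℂ] H) (f : ℝ → ℝ) (hf : Continuous f) :
    a * cfc f (adjoint a * a) = cfc f (a * adjoint a) * a := by
  rcases subsingleton_or_nontrivial H with hH | hH
  · exact Subsingleton.elim _ _
  set b₁ := adjoint a * a with hb₁def
  set b₂ := a * adjoint a with hb₂def
  have hb₁ : IsSelfAdjoint b₁ := by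
    rw [hb₁def, ← star_eq_adjoint]; exact IsSelfAdjoint.star_mul_self a
  have hb₂ : IsSelfAdjoint b₂ := by
    rw [hb₂def, ← star_eq_adjoint]; exact IsSelfAdjoint.mul_star_self a
  set M := max ‖b₁‖ ‖b₂‖ with hM
  have hs₁ : spectrum ℝ b₁ ⊆ Set.Icc (-M) M := by
    intro x hx
    have h := spectrum.norm_le_norm_of_mem hx
    rw [Real.norm_eq_abs, abs_le] at h
    constructor
    · linarith [h.1, le_max_left ‖b₁‖ ‖b₂‖]
    · linarith [h.2, le_max_left ‖b₁‖ ‖b₂‖]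
  have hs₂ : spectrum ℝ b₂ ⊆ Set.Icc (-M) M := by
    intro x hx
    have h := spectrum.norm_le_norm_of_mem hx
    rw [Real.norm_eq_abs, abs_le] at h
    constructor
    · linarith [h.1, le_max_right ‖b₁‖ ‖b₂‖]
    · linarith [h.2, le_max_right ‖b₁‖ ‖b₂‖]
  rw [← sub_eq_zero, ← norm_le_zero_iff]
  refine le_of_forall_pos_le_add fun ε hε => ?_
  have hd : (0:ℝ) < 2 * ‖a‖ + 1 := by positivity
  obtain ⟨p, hp⟩ := exists_polynomial_near_of_continuousOn (-M) M f hf.continuousOn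
    (ε / (2 * ‖a‖ + 1)) (by positivity)
  have key : ∀ b : H →L[ℂ] H, IsSelfAdjoint b → spectrum ℝ b ⊆ Set.Icc (-M) M →
      ‖cfc f b - Polynomial.aeval b p‖ ≤ ε / (2 * ‖a‖ + 1) := by
    intro b hb hs
    rw [← cfc_polynomial p b hb, ← cfc_sub f p.eval b hf.continuousOn
      p.continuous_aeval.continuousOn]
    refine norm_cfc_le (by positivity) fun x hx => ?_
    rw [Real.norm_eq_abs, abs_sub_comm]
    exact (hp x (hs hx)).le
  have h₁ := key b₁ hb₁ hs₁
  have h₂ := key b₂ hb₂ hs₂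
  have heq : a * cfc f b₁ - cfc f b₂ * a
      = a * (cfc f b₁ - Polynomial.aeval b₁ p) + (Polynomial.aeval b₂ p - cfc f b₂) * a := by
    rw [mul_sub, sub_mul, aeval_intertwine]; abel
  calc ‖a * cfc f b₁ - cfc f b₂ * a‖
      ≤ ‖a * (cfc f b₁ - Polynomial.aeval b₁ p)‖ + ‖(Polynomial.aeval b₂ p - cfc f b₂) * a‖ := by
        rw [heq]; exact norm_add_le _ _
    _ ≤ ‖a‖ * (ε / (2 * ‖a‖ + 1)) + (ε / (2 * ‖a‖ + 1)) * ‖a‖ := by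
        gcongr
        · exact (norm_mul_le _ _).trans (by gcongr)
        · refine (norm_mul_le _ _).trans ?_
          rw [norm_sub_rev]
          gcongr
    _ = ε * (2 * ‖a‖) / (2 * ‖a‖ + 1) := by ring
    _ ≤ 0 + ε := by
        rw [zero_add, div_le_iff₀ hd]
        nlinarith [norm_nonneg a, hε.le]

lemma sqrt_sqrt_eq_cfc (b : H →L[ℂ] H) (hb : 0 ≤ b) :
    CFC.sqrt (CFC.sqrt b) = cfc (fun x : ℝ => Real.sqrt (Real.sqrt (max x 0))) b := by
  have hb' : IsSelfAdjoint b := hb.isSelfAdjoint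
  have hc1 : Continuous (fun x : ℝ => Real.sqrt (max x 0)) :=
    Real.continuous_sqrt.comp (continuous_id.max continuous_const)
  have hc2 : Continuous (fun x : ℝ => Real.sqrt (Real.sqrt (max x 0))) :=
    Real.continuous_sqrt.comp hc1
  have h1 : CFC.sqrt b = cfc (fun x : ℝ => Real.sqrt (max x 0)) b := by
    rw [CFC.sqrt_eq_iff b _ hb (cfc_nonneg fun x _ => Real.sqrt_nonneg _)]
    rw [← cfc_mul _ _ b hc1.continuousOn hc1.continuousOn]
    have : cfc (fun x : ℝ => Real.sqrt (max x 0) * Real.sqrt (max x 0)) b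
        = cfc (fun x : ℝ => x) b := by
      apply cfc_congr
      intro x hx
      show Real.sqrt (max x 0) * Real.sqrt (max x 0) = x
      rw [Real.mul_self_sqrt (le_max_right x 0), max_eq_left (spectrum_nonneg_of_nonneg hb hx)]
    rw [this, cfc_id' ℝ b hb']
  rw [h1]
  rw [CFC.sqrt_eq_iff _ _ (cfc_nonneg fun x _ => Real.sqrt_nonneg _)
    (cfc_nonneg fun x _ => Real.sqrt_nonneg _)]
  rw [← cfc_mul _ _ b hc2.continuousOn hc2.continuousOn]
  exact cfc_congr fun x _ => by
    show Real.sqrt (Real.sqrt (max x 0)) * Real.sqrt (Real.sqrt (max x 0)) = Real.sqrt (max x 0)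
    rw [Real.mul_self_sqrt (Real.sqrt_nonneg _)]

lemma hmul_cfc (g h : ℝ → ℝ) (hg : Continuous g) (hh : Continuous h) (b : H →L[ℂ] H) :
    cfc g b * cfc h b = cfc (fun t => g t * h t) b :=
  (cfc_mul g h b hg.continuousOn hh.continuousOn).symm

lemma sa_inner (S : H →L[ℂ] H) (hS : IsSelfAdjoint S) (u v : H) :
    (inner ℂ (S u) v : ℂ) = inner ℂ u (S v) := by
  nth_rewrite 1 [show S = adjoint S by rw [← star_eq_adjoint]; exact hS.star_eq.symm]
  exact adjoint_inner_left S v u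

lemma ms_key (a : H →L[ℂ] H) (δ : ℝ) (hδ : 0 < δ) (x y : H) :
    ‖(inner ℂ (a x) y : ℂ)‖ ≤
      ‖cfc (fun t : ℝ => Real.sqrt (Real.sqrt (max t 0 + δ))) (adjoint a * a) x‖ *
      ‖cfc (fun t : ℝ => Real.sqrt (Real.sqrt (max t 0 + δ))) (a * adjoint a) y‖ := by
  have hb₁nn : (0 : H →L[ℂ] H) ≤ adjoint a * a := by
    rw [← star_eq_adjoint]; exact star_mul_self_nonneg a
  have hb₂nn : (0 : H →L[ℂ] H) ≤ a * adjoint a := by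
    rw [← star_eq_adjoint]; exact mul_star_self_nonneg a
  have hb₁sa : IsSelfAdjoint (adjoint a * a) := hb₁nn.isSelfAdjoint
  have hb₂sa : IsSelfAdjoint (a * adjoint a) := hb₂nn.isSelfAdjoint
  set pδ : ℝ → ℝ := fun t => Real.sqrt (Real.sqrt (max t 0 + δ)) with hpδdef
  have hpc : Continuous pδ := by
    exact Real.continuous_sqrt.comp (Real.continuous_sqrt.comp
      ((continuous_id.max continuous_const).add continuous_const))
  have hppos : ∀ t, 0 < pδ t := fun t =>
    Real.sqrt_pos.2 (Real.sqrt_pos.2 (add_pos_of_nonneg_of_pos (le_max_right t 0) hδ))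
  set qδ : ℝ → ℝ := fun t => (pδ t)⁻¹ with hqδdef
  have hqc : Continuous qδ := hpc.inv₀ fun t => (hppos t).ne'
  -- inverse identities
  have hinv : ∀ (b : H →L[ℂ] H), IsSelfAdjoint b →
      cfc pδ b * cfc qδ b = 1 ∧ cfc qδ b * cfc pδ b = 1 := by
    intro b hb
    constructor
    · rw [hmul_cfc pδ qδ hpc hqc b]
      have : cfc (fun t => pδ t * qδ t) b = cfc (1 : ℝ → ℝ) b :=
        cfc_congr fun t _ => mul_inv_cancel₀ (hppos t).ne'
      rw [this, cfc_one ℝ b]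
    · rw [hmul_cfc qδ pδ hqc hpc b]
      have : cfc (fun t => qδ t * pδ t) b = cfc (1 : ℝ → ℝ) b :=
        cfc_congr fun t _ => inv_mul_cancel₀ (hppos t).ne'
      rw [this, cfc_one ℝ b]
  -- the contraction R
  set R : H →L[ℂ] H := cfc qδ (a * adjoint a) * (a * cfc qδ (adjoint a * a)) with hRdef
  have hfact : a = cfc pδ (a * adjoint a) * (R * cfc pδ (adjoint a * a)) := by
    rw [hRdef, mul_assoc _ _ (cfc pδ (adjoint a * a)), mul_assoc a,
      (hinv _ hb₁sa).2, mul_one, ← mul_assoc, (hinv _ hb₂sa).1, one_mul]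
  have hq2c : Continuous (fun t => qδ t * qδ t) := hqc.mul hqc
  have hRR : star R * R = cfc (fun t => qδ t * ((qδ t * qδ t) * (t * qδ t))) (adjoint a * a) := by
    have hstar : star R = cfc qδ (adjoint a * a) * (adjoint a * cfc qδ (a * adjoint a)) := by
      rw [hRdef, star_mul, star_mul,
        (cfc_predicate qδ (adjoint a * a) : IsSelfAdjoint _).star_eq,
        (cfc_predicate qδ (a * adjoint a) : IsSelfAdjoint _).star_eq,
        star_eq_adjoint a, mul_assoc]
    have hQ2 : adjoint a * cfc (fun t => qδ t * qδ t) (a * adjoint a)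
        = cfc (fun t => qδ t * qδ t) (adjoint a * a) * adjoint a := by
      have := cfc_intertwine (adjoint a) (fun t => qδ t * qδ t) hq2c
      simpa only [adjoint_adjoint] using this
    have e1 : star R * R
        = cfc qδ (adjoint a * a) * ((adjoint a * (cfc qδ (a * adjoint a) * cfc qδ (a * adjoint a)))
            * (a * cfc qδ (adjoint a * a))) := by
      rw [hstar, hRdef]; noncomm_ring
    rw [e1, hmul_cfc qδ qδ hqc hqc, hQ2]
    have e2 : cfc qδ (adjoint a * a) * ((cfc (fun t => qδ t * qδ t) (adjoint a * a) * adjoint a)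
            * (a * cfc qδ (adjoint a * a)))
        = cfc qδ (adjoint a * a) * (cfc (fun t => qδ t * qδ t) (adjoint a * a)
            * ((adjoint a * a) * cfc qδ (adjoint a * a))) := by noncomm_ring
    rw [e2]
    have e3 : (adjoint a * a) * cfc qδ (adjoint a * a)
        = cfc (fun t : ℝ => t * qδ t) (adjoint a * a) := by
      rw [← hmul_cfc (fun t : ℝ => t) qδ continuous_id hqc, cfc_id' ℝ _ hb₁sa]
    rw [e3, hmul_cfc (fun t => qδ t * qδ t) (fun t : ℝ => t * qδ t) hq2c (continuous_id.mul hqc),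
      hmul_cfc qδ (fun t : ℝ => qδ t * qδ t * (t * qδ t)) hqc (hq2c.mul (continuous_id.mul hqc))]
  have hRnorm : ‖R‖ ≤ 1 := by
    have hb : ‖star R * R‖ ≤ 1 := by
      rw [hRR]
      refine norm_cfc_le zero_le_one fun t ht => ?_
      have ht0 : 0 ≤ t := spectrum_nonneg_of_nonneg hb₁nn ht
      have hu : 0 < pδ t := hppos t
      have hu4 : pδ t * pδ t * (pδ t * pδ t) = t + δ := by
        have h1 : pδ t * pδ t = Real.sqrt (max t 0 + δ) :=
          Real.mul_self_sqrt (Real.sqrt_nonneg _)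
        rw [h1, Real.mul_self_sqrt (add_pos_of_nonneg_of_pos (le_max_right t 0) hδ).le,
          max_eq_left ht0]
      have hval : qδ t * ((qδ t * qδ t) * (t * qδ t)) = t / (t + δ) := by
        calc qδ t * ((qδ t * qδ t) * (t * qδ t))
            = t * (pδ t * pδ t * (pδ t * pδ t))⁻¹ := by rw [hqδdef]; ring
          _ = t / (t + δ) := by rw [hu4, div_eq_mul_inv]
      rw [Real.norm_eq_abs, hval, abs_of_nonneg (by positivity)]
      exact div_le_one_of_le₀ (by linarith) (by positivity)
    have h := CStarRing.norm_star_mul_self (x := R)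
    nlinarith [norm_nonneg R]
  -- assemble
  have hfac2 : (inner ℂ (a x) y : ℂ)
      = inner ℂ (R (cfc pδ (adjoint a * a) x)) (cfc pδ (a * adjoint a) y) := by
    conv_lhs => rw [hfact]
    rw [ContinuousLinearMap.mul_apply, ContinuousLinearMap.mul_apply, sa_inner _ (cfc_predicate pδ (a * adjoint a))]
  rw [hfac2]
  calc ‖(inner ℂ (R (cfc pδ (adjoint a * a) x)) (cfc pδ (a * adjoint a) y) : ℂ)‖
      ≤ ‖R (cfc pδ (adjoint a * a) x)‖ * ‖cfc pδ (a * adjoint a) y‖ := norm_inner_le_norm _ _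
    _ ≤ ‖cfc pδ (adjoint a * a) x‖ * ‖cfc pδ (a * adjoint a) y‖ := by
        gcongr
        refine (R.le_opNorm _).trans ?_
        exact mul_le_of_le_one_left (norm_nonneg _) hRnorm

lemma sqrt_add_le' (u δ : ℝ) (hu : 0 ≤ u) (hδ : 0 ≤ δ) :
    Real.sqrt (u + δ) ≤ Real.sqrt u + Real.sqrt δ := by
  rw [show Real.sqrt u + Real.sqrt δ
      = Real.sqrt ((Real.sqrt u + Real.sqrt δ) ^ 2) from
    (Real.sqrt_sq (by positivity)).symm]
  apply Real.sqrt_le_sqrt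
  nlinarith [Real.sq_sqrt hu, Real.sq_sqrt hδ, Real.sqrt_nonneg u, Real.sqrt_nonneg δ]

/-- norm-squared comparison between the `δ`-regularized fourth root and the true one. -/
lemma sq_compare (b : H →L[ℂ] H) (hb : 0 ≤ b) (δ : ℝ) (hδ : 0 < δ) (z : H) :
    ‖cfc (fun t : ℝ => Real.sqrt (Real.sqrt (max t 0 + δ))) b z‖ ^ 2
      ≤ ‖cfc (fun t : ℝ => Real.sqrt (Real.sqrt (max t 0))) b z‖ ^ 2
        + Real.sqrt δ * ‖z‖ ^ 2 := by
  have hbsa : IsSelfAdjoint b := hb.isSelfAdjoint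
  set pδ : ℝ → ℝ := fun t => Real.sqrt (Real.sqrt (max t 0 + δ)) with hpδdef
  set f₀ : ℝ → ℝ := fun t => Real.sqrt (Real.sqrt (max t 0)) with hf₀def
  have hmaxc : Continuous (fun t : ℝ => max t 0) := continuous_id.max continuous_const
  have hpc : Continuous pδ :=
    Real.continuous_sqrt.comp (Real.continuous_sqrt.comp (hmaxc.add continuous_const))
  have hfc : Continuous f₀ := Real.continuous_sqrt.comp (Real.continuous_sqrt.comp hmaxc)
  -- squares
  have hsq1 : cfc pδ b * cfc pδ b = cfc (fun t : ℝ => Real.sqrt (max t 0 + δ)) b := by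
    rw [hmul_cfc pδ pδ hpc hpc]
    exact cfc_congr fun t _ => Real.mul_self_sqrt (Real.sqrt_nonneg _)
  have hsq2 : cfc f₀ b * cfc f₀ b = cfc (fun t : ℝ => Real.sqrt (max t 0)) b := by
    rw [hmul_cfc f₀ f₀ hfc hfc]
    exact cfc_congr fun t _ => Real.mul_self_sqrt (Real.sqrt_nonneg _)
  have hDnorm : ‖cfc pδ b * cfc pδ b - cfc f₀ b * cfc f₀ b‖ ≤ Real.sqrt δ := by
    rw [hsq1, hsq2, ← cfc_sub (fun t : ℝ => Real.sqrt (max t 0 + δ))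
      (fun t : ℝ => Real.sqrt (max t 0)) b (by fun_prop) (by fun_prop)]
    refine norm_cfc_le (Real.sqrt_nonneg δ) fun t _ => ?_
    rw [Real.norm_eq_abs, abs_of_nonneg
      (sub_nonneg.2 (Real.sqrt_le_sqrt (by linarith)))]
    have := sqrt_add_le' (max t 0) δ (le_max_right t 0) hδ.le
    linarith
  -- expand norms via inner ℂ products
  have expand : ∀ (g : ℝ → ℝ), Continuous g →
      (‖cfc g b z‖ ^ 2 : ℝ) = RCLike.re (inner ℂ z ((cfc g b * cfc g b) z) : ℂ) := by
    intro g hg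
    rw [ContinuousLinearMap.mul_apply, ← sa_inner _ (cfc_predicate g b), inner_self_eq_norm_sq]
  rw [expand pδ hpc, expand f₀ hfc]
  have hsplit : (cfc pδ b * cfc pδ b) z
      = (cfc f₀ b * cfc f₀ b) z + (cfc pδ b * cfc pδ b - cfc f₀ b * cfc f₀ b) z := by
    simp
  rw [hsplit, inner_add_right, map_add]
  gcongr
  calc RCLike.re (inner ℂ z ((cfc pδ b * cfc pδ b - cfc f₀ b * cfc f₀ b) z) : ℂ)
      ≤ ‖(inner ℂ z ((cfc pδ b * cfc pδ b - cfc f₀ b * cfc f₀ b) z) : ℂ)‖ := RCLike.re_le_norm _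
    _ ≤ ‖z‖ * ‖(cfc pδ b * cfc pδ b - cfc f₀ b * cfc f₀ b) z‖ := norm_inner_le_norm _ _
    _ ≤ ‖z‖ * (Real.sqrt δ * ‖z‖) := by
        gcongr
        exact (le_opNorm _ _).trans (by gcongr)
    _ = Real.sqrt δ * ‖z‖ ^ 2 := by ring

lemma mixed_schwarz (a : H →L[ℂ] H) (x y : H) :
    ‖(inner ℂ (a x) y : ℂ)‖ ≤
      ‖CFC.sqrt (CFC.sqrt (adjoint a * a)) x‖ * ‖CFC.sqrt (CFC.sqrt (a * adjoint a)) y‖ := by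
  have hb₁nn : (0 : H →L[ℂ] H) ≤ adjoint a * a := by
    rw [← star_eq_adjoint]; exact star_mul_self_nonneg a
  have hb₂nn : (0 : H →L[ℂ] H) ≤ a * adjoint a := by
    rw [← star_eq_adjoint]; exact mul_star_self_nonneg a
  rw [sqrt_sqrt_eq_cfc _ hb₁nn, sqrt_sqrt_eq_cfc _ hb₂nn]
  set Px := ‖cfc (fun t : ℝ => Real.sqrt (Real.sqrt (max t 0))) (adjoint a * a) x‖ with hPx
  set Qy := ‖cfc (fun t : ℝ => Real.sqrt (Real.sqrt (max t 0))) (a * adjoint a) y‖ with hQy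
  have key : ∀ δ : ℝ, 0 < δ → ‖(inner ℂ (a x) y : ℂ)‖ ≤
      Real.sqrt (Px ^ 2 + Real.sqrt δ * ‖x‖ ^ 2) * Real.sqrt (Qy ^ 2 + Real.sqrt δ * ‖y‖ ^ 2) := by
    intro δ hδ
    refine (ms_key a δ hδ x y).trans ?_
    have h1 := sq_compare (adjoint a * a) hb₁nn δ hδ x
    have h2 := sq_compare (a * adjoint a) hb₂nn δ hδ y
    have e1 : ‖cfc (fun t : ℝ => Real.sqrt (Real.sqrt (max t 0 + δ))) (adjoint a * a) x‖
        ≤ Real.sqrt (Px ^ 2 + Real.sqrt δ * ‖x‖ ^ 2) := by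
      rw [← Real.sqrt_sq (norm_nonneg _)]
      exact Real.sqrt_le_sqrt h1
    have e2 : ‖cfc (fun t : ℝ => Real.sqrt (Real.sqrt (max t 0 + δ))) (a * adjoint a) y‖
        ≤ Real.sqrt (Qy ^ 2 + Real.sqrt δ * ‖y‖ ^ 2) := by
      rw [← Real.sqrt_sq (norm_nonneg _)]
      exact Real.sqrt_le_sqrt h2
    exact mul_le_mul e1 e2 (norm_nonneg _) (Real.sqrt_nonneg _)
  -- limit as δ → 0⁺
  have hcont : ContinuousAt (fun δ : ℝ =>
      Real.sqrt (Px ^ 2 + Real.sqrt δ * ‖x‖ ^ 2) * Real.sqrt (Qy ^ 2 + Real.sqrt δ * ‖y‖ ^ 2)) 0 := by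
    fun_prop
  have hval : Real.sqrt (Px ^ 2 + Real.sqrt 0 * ‖x‖ ^ 2) * Real.sqrt (Qy ^ 2 + Real.sqrt 0 * ‖y‖ ^ 2)
      = Px * Qy := by
    rw [Real.sqrt_zero]
    simp [Real.sqrt_sq (norm_nonneg _)]
    rw [Real.sqrt_sq (by rw [hPx]; positivity), Real.sqrt_sq (by rw [hQy]; positivity)]
  have htend : Filter.Tendsto (fun δ : ℝ =>
      Real.sqrt (Px ^ 2 + Real.sqrt δ * ‖x‖ ^ 2) * Real.sqrt (Qy ^ 2 + Real.sqrt δ * ‖y‖ ^ 2))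
      (nhdsWithin 0 (Set.Ioi 0)) (nhds (Px * Qy)) := by
    rw [← hval]
    exact hcont.continuousWithinAt.tendsto
  exact ge_of_tendsto htend (eventually_nhdsWithin_of_forall fun δ hδ => key δ hδ)

lemma qf_bound {n : ℕ} (S : Fin n → (H →L[ℂ] H)) (hS : ∀ k, IsSelfAdjoint (S k))
    (A : Matrix (Fin n) (Fin n) ℝ) (hA : ∀ j k, A j k = ‖S j * S k‖) (x : H) :
    ∑ k, ‖S k x‖ ^ 2 ≤ ‖Matrix.toEuclideanCLM (𝕜 := ℝ) A‖ * ‖x‖ ^ 2 := by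
  set Qv := ∑ k, ‖S k x‖ ^ 2 with hQv
  have hQv0 : 0 ≤ Qv := Finset.sum_nonneg fun k _ => sq_nonneg _
  set w : H := ∑ j, S j (S j x) with hw
  -- Qv = re ⟨w, x⟩
  have h1 : Qv = RCLike.re (inner ℂ w x : ℂ) := by
    rw [hw, sum_inner]
    rw [map_sum]
    refine Finset.sum_congr rfl fun j _ => ?_
    rw [sa_inner _ (hS j), ← inner_self_eq_norm_sq (𝕜 := ℂ)]
  have h2 : Qv ≤ ‖w‖ * ‖x‖ := by
    rw [h1]
    exact (RCLike.re_le_norm _).trans (norm_inner_le_norm _ _)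
  -- coordinates vector
  set c : EuclideanSpace ℝ (Fin n) := (WithLp.equiv 2 (Fin n → ℝ)).symm (fun k => ‖S k x‖) with hc
  have hck : ∀ k, c k = ‖S k x‖ := fun k => rfl
  have hcn : ‖c‖ ^ 2 = Qv := by
    rw [← real_inner_self_eq_norm_sq, PiLp.inner_apply, hQv]
    exact Finset.sum_congr rfl fun k _ => by
      rw [hck, RCLike.inner_apply, starRingEnd_apply, star_trivial, sq]
  -- ‖w‖² ≤ ⟨A'c, c⟩
  have h3 : ‖w‖ ^ 2 ≤ ∑ k, ∑ j, A j k * c k * c j := by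
    rw [← inner_self_eq_norm_sq (𝕜 := ℂ)]
    nth_rewrite 1 [hw]
    rw [sum_inner, map_sum]
    refine Finset.sum_le_sum fun k _ => ?_
    rw [hw, inner_sum, map_sum]
    refine Finset.sum_le_sum fun j _ => ?_
    have e : (inner ℂ (S k (S k x)) (S j (S j x)) : ℂ)
        = inner ℂ ((S j * S k) (S k x)) (S j x) := by
      rw [← sa_inner (S j) (hS j) (S k (S k x)) (S j x), ContinuousLinearMap.mul_apply]
    rw [e]
    calc RCLike.re (inner ℂ ((S j * S k) (S k x)) (S j x) : ℂ)
        ≤ ‖(inner ℂ ((S j * S k) (S k x)) (S j x) : ℂ)‖ := RCLike.re_le_norm _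
      _ ≤ ‖(S j * S k) (S k x)‖ * ‖S j x‖ := norm_inner_le_norm _ _
      _ ≤ ‖S j * S k‖ * ‖S k x‖ * ‖S j x‖ := by
          gcongr
          exact le_opNorm _ _
      _ = A j k * c k * c j := by rw [hA j k, hck, hck]
  -- matrix quadratic form bound
  have h4 : ∑ k, ∑ j, A j k * c k * c j
      ≤ ‖Matrix.toEuclideanCLM (𝕜 := ℝ) A‖ * Qv := by
    have hid : ∑ k, ∑ j, A j k * c k * c j
        = inner (𝕜 := ℝ) (Matrix.toEuclideanCLM (𝕜 := ℝ) A c) c := by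
      rw [PiLp.inner_apply, Finset.sum_comm]
      refine Finset.sum_congr rfl fun j _ => ?_
      rw [RCLike.inner_apply, starRingEnd_apply, star_trivial]
      have happ : (Matrix.toEuclideanCLM (𝕜 := ℝ) A c) j = ∑ k, A j k * c k := by
        have := congrFun (Matrix.ofLp_toEuclideanCLM (𝕜 := ℝ) A c) j
        simpa [Matrix.toLin'_apply, Matrix.mulVec, dotProduct] using this
      rw [happ, Finset.mul_sum]
      exact Finset.sum_congr rfl fun k _ => by ring
    rw [hid]
    calc inner (𝕜 := ℝ) (Matrix.toEuclideanCLM (𝕜 := ℝ) A c) c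
        ≤ ‖Matrix.toEuclideanCLM (𝕜 := ℝ) A c‖ * ‖c‖ := real_inner_le_norm _ _
      _ ≤ ‖Matrix.toEuclideanCLM (𝕜 := ℝ) A‖ * ‖c‖ * ‖c‖ := by
          gcongr
          exact le_opNorm _ _
      _ = ‖Matrix.toEuclideanCLM (𝕜 := ℝ) A‖ * Qv := by
          rw [mul_assoc, ← sq, hcn]
  -- combine
  rcases hQv0.eq_or_lt with h0 | h0
  · rw [← h0]
    positivity
  · have h5 : Qv ^ 2 ≤ ‖Matrix.toEuclideanCLM (𝕜 := ℝ) A‖ * Qv * ‖x‖ ^ 2 := by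
      have hsq : Qv ^ 2 ≤ ‖w‖ ^ 2 * ‖x‖ ^ 2 := by nlinarith [norm_nonneg w, norm_nonneg x]
      nlinarith [sq_nonneg ‖x‖, h3.trans h4]
    nlinarith

end Auxiliary

/-- The sharper bound from Remark 1: `‖∑ T k‖² ≤ ‖A‖ ‖B‖` with
`A j k = ‖ |T j|^{1/2} |T k|^{1/2} ‖` and `B j k = ‖ |T j *|^{1/2} |T k *|^{1/2} ‖`. -/
theorem improved_cotlar_stein_fourth_roots {H : Type*} [NormedAddCommGroup H]
    [InnerProductSpace ℂ H] [CompleteSpace H] {n : ℕ} (T : Fin n → (H →L[ℂ] H))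
    (A B : Matrix (Fin n) (Fin n) ℝ)
    (hA : ∀ j k, A j k =
      ‖CFC.sqrt (CFC.sqrt (adjoint (T j) * T j)) * CFC.sqrt (CFC.sqrt (adjoint (T k) * T k))‖)
    (hB : ∀ j k, B j k =
      ‖CFC.sqrt (CFC.sqrt (T j * adjoint (T j))) * CFC.sqrt (CFC.sqrt (T k * adjoint (T k)))‖) :
    ‖∑ k, T k‖ ^ 2 ≤
      ‖Matrix.toEuclideanCLM (𝕜 := ℝ) A‖ * ‖Matrix.toEuclideanCLM (𝕜 := ℝ) B‖ := by
  set P : Fin n → (H →L[ℂ] H) := fun k => CFC.sqrt (CFC.sqrt (adjoint (T k) * T k)) with hP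
  set Q : Fin n → (H →L[ℂ] H) := fun k => CFC.sqrt (CFC.sqrt (T k * adjoint (T k))) with hQ
  have hPsa : ∀ k, IsSelfAdjoint (P k) := fun k => (CFC.sqrt_nonneg _).isSelfAdjoint
  have hQsa : ∀ k, IsSelfAdjoint (Q k) := fun k => (CFC.sqrt_nonneg _).isSelfAdjoint
  set nA := ‖Matrix.toEuclideanCLM (𝕜 := ℝ) A‖ with hnA
  set nB := ‖Matrix.toEuclideanCLM (𝕜 := ℝ) B‖ with hnB
  have hnA0 : 0 ≤ nA := norm_nonneg _
  have hnB0 : 0 ≤ nB := norm_nonneg _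
  set S : H →L[ℂ] H := ∑ k, T k with hS
  have key : ∀ z : H, ‖S z‖ ^ 2 ≤ Real.sqrt (nA * nB) * ‖z‖ * ‖S z‖ := by
    intro z
    set u := S z with hu
    have e1 : (‖S z‖ : ℝ) ^ 2 = ∑ k, RCLike.re (inner ℂ (T k z) u : ℂ) := by
      rw [← inner_self_eq_norm_sq (𝕜 := ℂ), ← hu]
      nth_rewrite 1 [hu, hS]
      rw [ContinuousLinearMap.sum_apply, sum_inner, map_sum]
    have e2 : ∑ k, RCLike.re (inner ℂ (T k z) u : ℂ) ≤ ∑ k, ‖P k z‖ * ‖Q k u‖ := by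
      refine Finset.sum_le_sum fun k _ => ?_
      exact (RCLike.re_le_norm _).trans (mixed_schwarz (T k) z u)
    have e3 : ∑ k, ‖P k z‖ * ‖Q k u‖
        ≤ Real.sqrt (∑ k, ‖P k z‖ ^ 2) * Real.sqrt (∑ k, ‖Q k u‖ ^ 2) := by
      have hcs := Finset.sum_mul_sq_le_sq_mul_sq Finset.univ
        (fun k => ‖P k z‖) (fun k => ‖Q k u‖)
      have hnn : (0:ℝ) ≤ ∑ k, ‖P k z‖ * ‖Q k u‖ :=
        Finset.sum_nonneg fun k _ => mul_nonneg (norm_nonneg _) (norm_nonneg _)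
      rw [← Real.sqrt_sq hnn, ← Real.sqrt_mul (Finset.sum_nonneg fun k _ => sq_nonneg _)]
      exact Real.sqrt_le_sqrt hcs
    have e4 : Real.sqrt (∑ k, ‖P k z‖ ^ 2) ≤ Real.sqrt (nA * ‖z‖ ^ 2) :=
      Real.sqrt_le_sqrt (qf_bound P hPsa A hA z)
    have e5 : Real.sqrt (∑ k, ‖Q k u‖ ^ 2) ≤ Real.sqrt (nB * ‖u‖ ^ 2) :=
      Real.sqrt_le_sqrt (qf_bound Q hQsa B hB u)
    calc ‖S z‖ ^ 2 = ∑ k, RCLike.re (inner ℂ (T k z) u : ℂ) := e1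
      _ ≤ ∑ k, ‖P k z‖ * ‖Q k u‖ := e2
      _ ≤ Real.sqrt (∑ k, ‖P k z‖ ^ 2) * Real.sqrt (∑ k, ‖Q k u‖ ^ 2) := e3
      _ ≤ Real.sqrt (nA * ‖z‖ ^ 2) * Real.sqrt (nB * ‖u‖ ^ 2) :=
          mul_le_mul e4 e5 (Real.sqrt_nonneg _) (Real.sqrt_nonneg _)
      _ = Real.sqrt (nA * nB) * ‖z‖ * ‖S z‖ := by
          rw [Real.sqrt_mul hnA0, Real.sqrt_mul hnB0, Real.sqrt_sq (norm_nonneg _),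
            Real.sqrt_sq (norm_nonneg _), Real.sqrt_mul hnA0, ← hu]
          ring
  have hSnorm : ‖S‖ ≤ Real.sqrt (nA * nB) := by
    refine opNorm_le_bound _ (Real.sqrt_nonneg _) fun z => ?_
    rcases eq_or_lt_of_le (norm_nonneg (S z)) with h0 | h0
    · rw [← h0]
      positivity
    · nlinarith [key z]
  calc ‖S‖ ^ 2 ≤ Real.sqrt (nA * nB) ^ 2 :=
        pow_le_pow_left₀ (norm_nonneg _) hSnorm 2
    _ = nA * nB := Real.sq_sqrt (by positivity)
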